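/- For odd positive integers n₁ = 2k+1 and n₃ = 2l+1 and n ≥ 2, the group ⟨x₁,…,xₙ | r₁ = e, …, rₙ = e, x₁x₂⋯xₙ = e⟩, where rᵢ = xᵢ⁻¹(xᵢ⁻ᵏ x_{i+1}^{k+1} xᵢ⁻¹)ˡ xᵢ⁻ᵏ x_{i+1}^{k+1} ((x_{i+1}⁻ᵏ x_{i+2}^{k+1} x_{i+1}⁻¹)ˡ x_{i+1}⁻ᵏ x_{i+2}^{k+1})⁻¹ with subscripts mod n, admits a complete presentation and hence is not left-orderable when n ≤ 3. -/

import Mathlib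

/-- A group is left-orderable if there is a strict total order that is left-invariant. -/
def IsLeftOrderable (G : Type*) [Group G] : Prop :=
  ∃ r : G → G → Prop, IsStrictTotalOrder G r ∧ ∀ x y z : G, r x y → r (z * x) (z * y)

/-- A nonempty reduced word `w` blocks a sign sequence `ε` (where `true` stands for `+1`
and `false` for `-1`) if all letters of `w` appear with sign agreeing with `ε`, or all
letters appear with sign disagreeing with `ε`. -/
def Blocks {α : Type*} [DecidableEq α] (w : FreeGroup α) (ε : α → Bool) : Prop :=
  w ≠ 1 ∧ ((∀ p ∈ w.toWord, p.2 = ε p.1) ∨ (∀ p ∈ w.toWord, p.2 ≠ ε p.1))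

/-- The relator
`rᵢ = xᵢ⁻¹ (xᵢ⁻ᵏ x_{i+1}^{k+1} xᵢ⁻¹)ˡ xᵢ⁻ᵏ x_{i+1}^{k+1}
  ((x_{i+1}⁻ᵏ x_{i+2}^{k+1} x_{i+1}⁻¹)ˡ x_{i+1}⁻ᵏ x_{i+2}^{k+1})⁻¹`,
with subscripts taken modulo `n`, for the 2-bridge knot `[2k+1, 1, 2l+1]`. -/
def bridgeRel (n k l : ℕ) (i : ZMod n) : FreeGroup (ZMod n) :=
  (FreeGroup.of i)⁻¹ *
    (((FreeGroup.of i) ^ k)⁻¹ * (FreeGroup.of (i + 1)) ^ (k + 1) * (FreeGroup.of i)⁻¹) ^ l *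
    ((FreeGroup.of i) ^ k)⁻¹ * (FreeGroup.of (i + 1)) ^ (k + 1) *
    ((((FreeGroup.of (i + 1)) ^ k)⁻¹ * (FreeGroup.of (i + 2)) ^ (k + 1) *
        (FreeGroup.of (i + 1))⁻¹) ^ l *
      ((FreeGroup.of (i + 1)) ^ k)⁻¹ * (FreeGroup.of (i + 2)) ^ (k + 1))⁻¹

/-- The relators `r₁, …, rₙ` together with `x₁x₂⋯xₙ`. -/
def bridgeRels (n k l : ℕ) : Set (FreeGroup (ZMod n)) :=
  {w | ∃ i : ZMod n, w = bridgeRel n k l i} ∪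
    {((List.range n).map (fun j => FreeGroup.of ((j : ZMod n)))).prod}

open FreeGroup

section helpers
variable {α : Type*} [DecidableEq α]

/-- every letter of the reduced word of `w` has sign given by `f`. -/
def SignOK (f : α → Bool) (w : FreeGroup α) : Prop :=
  ∀ p ∈ w.toWord, p.2 = f p.1

lemma signOK_one (f : α → Bool) : SignOK f (1 : FreeGroup α) := by
  intro p hp; simp [FreeGroup.toWord_one] at hp

lemma signOK_mul {f : α → Bool} {u v : FreeGroup α} (hu : SignOK f u) (hv : SignOK f v) :
    SignOK f (u * v) := by
  intro p hp
  have h := (FreeGroup.toWord_mul_sublist u v).subset hp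
  rcases List.mem_append.1 h with h | h
  · exact hu p h
  · exact hv p h

lemma signOK_pow {f : α → Bool} {u : FreeGroup α} (hu : SignOK f u) (m : ℕ) :
    SignOK f (u ^ m) := by
  induction m with
  | zero => simpa using signOK_one f
  | succ m ih => rw [pow_succ]; exact signOK_mul ih hu

lemma signOK_of {f : α → Bool} {a : α} (h : f a = true) : SignOK f (FreeGroup.of a) := by
  intro p hp
  rw [FreeGroup.toWord_of] at hp
  simp at hp
  subst hp; simpa using h

lemma signOK_inv {f : α → Bool} {u : FreeGroup α} (hu : SignOK (fun a => !f a) u) :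
    SignOK f u⁻¹ := by
  intro p hp
  rw [FreeGroup.toWord_inv, FreeGroup.invRev] at hp
  rw [List.mem_reverse, List.mem_map] at hp
  obtain ⟨q, hq, rfl⟩ := hp
  have := hu q hq
  simp only [this]
  simp

lemma signOK_inv_of {f : α → Bool} {a : α} (h : f a = false) : SignOK f (FreeGroup.of a)⁻¹ := by
  exact signOK_inv (signOK_of (by simp [h]))

end helpers

lemma bridgeRel_eq (n k l : ℕ) (i : ZMod n) : bridgeRel n k l i
  = ((of i)⁻¹ * (((of i)⁻¹)^k * (of (i+1))^(k+1) * (of i)⁻¹)^l * ((of i)⁻¹)^k * (of (i+1))^(k+1))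
  * ((((of (i+1))⁻¹)^k * (of (i+2))^(k+1) * (of (i+1))⁻¹)^l * ((of (i+1))⁻¹)^k * (of (i+2))^(k+1))⁻¹ := by
  unfold bridgeRel; group

lemma signOK_bridgeRel (n k l : ℕ) (i : ZMod n) (h1 : i ≠ i + 1) (h2 : i + 2 ≠ i + 1) :
    SignOK (fun t => decide (t = i + 1)) (bridgeRel n k l i) := by
  rw [bridgeRel_eq]
  repeat'
    first
    | apply signOK_mul
    | apply signOK_pow
    | apply signOK_inv
    | exact signOK_of (by simp [h1, h2])

lemma bridgeRel_ne_one (n k l : ℕ) (i : ZMod n) (h1 : i ≠ i + 1) (h2 : i + 2 ≠ i + 1) :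
    bridgeRel n k l i ≠ 1 := by
  intro h
  have h' := congrArg (FreeGroup.lift
    (fun t : ZMod n => if t = i + 1 then Multiplicative.ofAdd (1 : ℤ) else 1)) h
  simp only [bridgeRel, _root_.map_mul, _root_.map_inv, _root_.map_pow, FreeGroup.lift_apply_of, h1, h2, if_true, if_false,
    ite_true, ite_false, if_neg h1, if_neg h2, _root_.map_one, one_pow, inv_one,
    one_mul, mul_one, if_pos] at h'
  have h'' := congrArg Multiplicative.toAdd h'
  simp only [toAdd_mul, toAdd_inv, toAdd_pow, toAdd_ofAdd, toAdd_one, smul_eq_mul, nsmul_eq_mul] at h''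
  push_cast at h''
  have hk : (0:ℤ) ≤ (k:ℤ) := Int.natCast_nonneg k
  have hl : (0:ℤ) ≤ (l:ℤ) := Int.natCast_nonneg l
  nlinarith

lemma signOK_listprod {α : Type*} [DecidableEq α] {β : Type*} (g : β → α) (L : List β) :
    SignOK (fun _ => true) ((L.map (fun b => FreeGroup.of (g b))).prod) := by
  induction L with
  | nil => simpa using signOK_one _
  | cons a t ih =>
      rw [List.map_cons, List.prod_cons]
      exact signOK_mul (signOK_of rfl) ih

theorem flatMap_pure' {α β : Type*} (l : List α) (f : α → β) :
    (l.flatMap fun a => [f a]) = l.map f := by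
  induction l with
  | nil => rfl
  | cons a t ih => simp [List.flatMap_cons, ih]

lemma long_eq (n : ℕ) : ((List.range n).map (fun j => FreeGroup.of ((j : ZMod n)))).prod
    = (((List.range n).map (fun j : ℕ => (j : ZMod n))).map (fun t => FreeGroup.of (id t))).prod := by
  simp [flatMap_pure', List.map_map, Function.comp]

lemma signOK_long (n : ℕ) :
    SignOK (fun _ => true) (((List.range n).map (fun j => FreeGroup.of ((j : ZMod n)))).prod) := by
  rw [long_eq]
  exact signOK_listprod id _

lemma long_ne_one (n : ℕ) (hn : 2 ≤ n) :
    ((List.range n).map (fun j => FreeGroup.of ((j : ZMod n)))).prod ≠ 1 := by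
  intro h
  rw [long_eq] at h
  have h' : FreeGroup.lift (fun _ : ZMod n => Multiplicative.ofAdd (1 : ℤ))
      ((((List.range n).map (fun j : ℕ => (j : ZMod n))).map (fun t => FreeGroup.of (id t))).prod)
      = 1 := by
    rw [h]; exact _root_.map_one _
  rw [_root_.map_list_prod, List.map_map] at h'
  simp only [Function.comp_def, FreeGroup.lift_apply_of] at h'
  rw [List.map_const', List.prod_replicate, List.length_map, List.length_range] at h'
  have h'' := congrArg Multiplicative.toAdd h'
  simp only [toAdd_pow, toAdd_ofAdd, toAdd_one, smul_eq_mul, nsmul_eq_mul, mul_one] at h''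
  push_cast at h''
  omega

lemma blocks_of_signOK {α : Type*} [DecidableEq α] {w : FreeGroup α} {f ε : α → Bool}
    (hne : w ≠ 1) (hs : SignOK f w)
    (h : (∀ a, f a = ε a) ∨ (∀ a, f a ≠ ε a)) :
    w ≠ 1 ∧ ((∀ p ∈ w.toWord, p.2 = ε p.1) ∨ (∀ p ∈ w.toWord, p.2 ≠ ε p.1)) := by
  refine ⟨hne, ?_⟩
  rcases h with h | h
  · exact Or.inl fun p hp => by rw [hs p hp, h]
  · exact Or.inr fun p hp => by rw [hs p hp]; exact h _

section order
variable {G : Type*} [Group G]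

lemma listprod_pos (r : G → G → Prop)
    (htrans : ∀ {a b c : G}, r a b → r b c → r a c)
    (hmul : ∀ x y z : G, r x y → r (z * x) (z * y)) :
    ∀ L : List G, (∀ g ∈ L, r 1 g) → L = [] ∨ r 1 L.prod := by
  intro L
  induction L with
  | nil => exact fun _ => Or.inl rfl
  | cons a t ih =>
      intro h
      right
      have ha := h a (List.mem_cons_self)
      rcases ih (fun g hg => h g (List.mem_cons_of_mem _ hg)) with rfl | ht
      · simpa using ha
      · have h2 : r a (a * t.prod) := by simpa using hmul 1 t.prod a ht
        rw [List.prod_cons]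
        exact htrans ha h2

lemma not_LO {α : Type*} [DecidableEq α] (rels : Set (FreeGroup α))
    (hcomp : ∀ ε : α → Bool, ∃ w ∈ rels,
      w ≠ 1 ∧ ((∀ p ∈ w.toWord, p.2 = ε p.1) ∨ (∀ p ∈ w.toWord, p.2 ≠ ε p.1)))
    (hgen : ∀ a : α, (PresentedGroup.of (rels := rels) a) ≠ 1) :
    ¬ IsLeftOrderable (PresentedGroup rels) := by
  rintro ⟨r, hsto, hmul⟩
  haveI := hsto
  classical
  let π : FreeGroup α →* PresentedGroup rels := QuotientGroup.mk' _
  have hπof : ∀ a : α, π (FreeGroup.of a) = PresentedGroup.of a := fun a => rfl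
  obtain ⟨w, hw, hne, hblock⟩ := hcomp (fun a => decide (r 1 (π (FreeGroup.of a))))
  have hπw : π w = 1 := (QuotientGroup.eq_one_iff _).2 (Subgroup.subset_normalClosure hw)
  have hlist : π w = (w.toWord.map fun p =>
      cond p.2 (π (FreeGroup.of p.1)) (π (FreeGroup.of p.1))⁻¹).prod := by
    conv_lhs => rw [← FreeGroup.mk_toWord (x := w)]
    rw [FreeGroup.lift_unique (f := fun a => π (FreeGroup.of a)) π (fun _ => rfl)]
    rw [FreeGroup.lift_mk]
  have htrans : ∀ {a b c : PresentedGroup rels}, r a b → r b c → r a c :=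
    fun hab hbc => _root_.trans hab hbc
  have hirr : ¬ r 1 1 := irrefl 1
  have hnil : w.toWord ≠ [] := fun hnil => hne (FreeGroup.toWord_eq_nil_iff.1 hnil)
  rcases hblock with hb | hb
  · -- every letter is positive
    have hpos : ∀ g ∈ (w.toWord.map fun p =>
        cond p.2 (π (FreeGroup.of p.1)) (π (FreeGroup.of p.1))⁻¹), r 1 g := by
      intro g hg
      rw [List.mem_map] at hg
      obtain ⟨p, hp, rfl⟩ := hg
      have hsign := hb p hp
      cases hp2 : p.2 with
      | true =>
          rw [hp2] at hsign
          have := of_decide_eq_true hsign.symm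
          simpa [hp2] using this
      | false =>
          rw [hp2] at hsign
          have hnr : ¬ r 1 (π (FreeGroup.of p.1)) := by
            intro hr
            rw [decide_eq_true hr] at hsign
            exact Bool.false_ne_true hsign
          have hne1 : π (FreeGroup.of p.1) ≠ 1 := by rw [hπof]; exact hgen p.1
          rcases trichotomous (r := r) (π (FreeGroup.of p.1)) 1 with hlt | heq | hgt
          · have := hmul _ _ (π (FreeGroup.of p.1))⁻¹ hlt
            simpa [hp2] using this
          · exact absurd heq hne1
          · exact absurd hgt hnr
    rcases listprod_pos r htrans hmul _ hpos with hLnil | hL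
    · exact hnil (List.map_eq_nil_iff.1 hLnil)
    · rw [← hlist, hπw] at hL
      exact hirr hL
  · -- every letter is negative : use the flipped relation
    have hmul' : ∀ x y z : PresentedGroup rels, (flip r) x y → (flip r) (z * x) (z * y) :=
      fun x y z h => hmul y x z h
    have htrans' : ∀ {a b c : PresentedGroup rels}, flip r a b → flip r b c → flip r a c :=
      fun hab hbc => htrans hbc hab
    have hpos : ∀ g ∈ (w.toWord.map fun p =>
        cond p.2 (π (FreeGroup.of p.1)) (π (FreeGroup.of p.1))⁻¹), flip r 1 g := by
      intro g hg
      rw [List.mem_map] at hg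
      obtain ⟨p, hp, rfl⟩ := hg
      have hsign := hb p hp
      cases hp2 : p.2 with
      | true =>
          rw [hp2] at hsign
          have hεf : decide (r 1 (π (FreeGroup.of p.1))) = false := by
            cases hdec : decide (r 1 (π (FreeGroup.of p.1))) with
            | false => rfl
            | true => exact absurd hdec.symm hsign
          have hnr : ¬ r 1 (π (FreeGroup.of p.1)) := of_decide_eq_false hεf
          have hne1 : π (FreeGroup.of p.1) ≠ 1 := by rw [hπof]; exact hgen p.1
          rcases trichotomous (r := r) (π (FreeGroup.of p.1)) 1 with hlt | heq | hgt
          · simpa [hp2, flip] using hlt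
          · exact absurd heq hne1
          · exact absurd hgt hnr
      | false =>
          rw [hp2] at hsign
          have hεt : decide (r 1 (π (FreeGroup.of p.1))) = true := by
            cases hdec : decide (r 1 (π (FreeGroup.of p.1))) with
            | true => rfl
            | false => exact absurd hdec.symm hsign
          have hr : r 1 (π (FreeGroup.of p.1)) := of_decide_eq_true hεt
          have := hmul _ _ (π (FreeGroup.of p.1))⁻¹ hr
          simpa [hp2, flip] using this
    rcases listprod_pos (flip r) htrans' hmul' _ hpos with hLnil | hL
    · exact hnil (List.map_eq_nil_iff.1 hLnil)
    · rw [← hlist, hπw] at hL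
      exact hirr hL

end order

lemma lift_bridgeRel_zmod {m : ℕ} (n k l : ℕ) (i : ZMod n) (g : ZMod n → ZMod m) :
    FreeGroup.lift (fun t => Multiplicative.ofAdd (g t)) (bridgeRel n k l i)
    = Multiplicative.ofAdd
        (-(((k:ZMod m)+1)*((l:ZMod m)+1)) * g i
         + (((k:ZMod m)+1)*((l:ZMod m)+1) + (l:ZMod m)*((k:ZMod m)+1) + (k:ZMod m)) * g (i+1)
         - (((k:ZMod m)+1)*((l:ZMod m)+1)) * g (i+2)) := by
  simp only [bridgeRel, _root_.map_mul, _root_.map_inv, _root_.map_pow, FreeGroup.lift_apply_of]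
  apply Multiplicative.toAdd.injective
  simp only [toAdd_mul, toAdd_inv, toAdd_pow, toAdd_ofAdd, nsmul_eq_mul]
  push_cast
  ring

lemma gen_ne_one_2 (k l : ℕ) (j : ZMod 2) :
    (PresentedGroup.of (rels := bridgeRels 2 k l) j) ≠ 1 := by
  set m : ℕ := 4 * (k+1) * (l+1) - 1 with hmdef
  have hpos : 0 < 4 * (k+1) * (l+1) := by positivity
  have hm1 : m + 1 = 4 * (k+1) * (l+1) := Nat.sub_add_cancel hpos
  have hm4 : 4 ≤ 4 * (k+1) * (l+1) := by nlinarith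
  haveI : Fact (1 < m) := ⟨by omega⟩
  have hKL : 4 * ((k : ZMod m)+1) * ((l : ZMod m)+1) = 1 := by
    have : ((4 * (k+1) * (l+1) : ℕ) : ZMod m) = ((m + 1 : ℕ) : ZMod m) := by rw [hm1]
    push_cast [ZMod.natCast_self] at this
    linear_combination this
  set g : ZMod 2 → ZMod m := fun t => if t = j then 1 else -1 with hg
  have hrels : ∀ r ∈ bridgeRels 2 k l, FreeGroup.lift (fun t => Multiplicative.ofAdd (g t)) r = 1 := by
    rintro r hr
    rcases hr with ⟨i, rfl⟩ | hr
    · rw [lift_bridgeRel_zmod, ofAdd_eq_one]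
      rcases (show ∀ i : ZMod 2, i = 0 ∨ i = 1 by decide) i with rfl | rfl <;>
        rcases (show ∀ j : ZMod 2, j = 0 ∨ j = 1 by decide) j with rfl | rfl <;>
        · simp only [hg, show (0:ZMod 2)+1 = 1 by decide, show (0:ZMod 2)+2 = 0 by decide,
            show (1:ZMod 2)+1 = 0 by decide, show (1:ZMod 2)+2 = 1 by decide,
            if_pos rfl, if_neg (show (0:ZMod 2) ≠ 1 by decide),
            if_neg (show (1:ZMod 2) ≠ 0 by decide)]
          first
            | linear_combination hKL
            | linear_combination -hKL
    · rw [Set.mem_singleton_iff] at hr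
      subst hr
      rw [long_eq]
      rw [_root_.map_list_prod, List.map_map]
      simp only [Function.comp_def, FreeGroup.lift_apply_of, id_eq]
      rw [show (List.range 2) = [0, 1] by decide]
      simp only [List.map_cons, List.map_nil, List.prod_cons, List.prod_nil, mul_one,
        Nat.cast_zero, Nat.cast_one]
      rw [← ofAdd_add, ofAdd_eq_one]
      rcases (show ∀ j : ZMod 2, j = 0 ∨ j = 1 by decide) j with rfl | rfl <;>
        · simp only [hg, if_pos rfl, if_neg (show (0:ZMod 2) ≠ 1 by decide),
            if_neg (show (1:ZMod 2) ≠ 0 by decide)]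
          ring
  intro h
  have h' := congrArg (PresentedGroup.toGroup hrels) h
  rw [_root_.map_one, PresentedGroup.toGroup.of] at h'
  have : (1 : ZMod m) = 0 := by
    have h2 := congrArg Multiplicative.toAdd h'
    simpa [hg] using h2
  exact one_ne_zero this

lemma gen_ne_one_3 (k l : ℕ) (j : ZMod 3) :
    (PresentedGroup.of (rels := bridgeRels 3 k l) j) ≠ 1 := by
  set m : ℕ := 3 * (k+1) * (l+1) - 1 with hmdef
  have hpos : 0 < 3 * (k+1) * (l+1) := by positivity
  have hm1 : m + 1 = 3 * (k+1) * (l+1) := Nat.sub_add_cancel hpos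
  have hm3 : 3 ≤ 3 * (k+1) * (l+1) := by nlinarith
  haveI : Fact (1 < m) := ⟨by omega⟩
  have hKL : 3 * ((k : ZMod m)+1) * ((l : ZMod m)+1) = 1 := by
    have : ((3 * (k+1) * (l+1) : ℕ) : ZMod m) = ((m + 1 : ℕ) : ZMod m) := by rw [hm1]
    push_cast [ZMod.natCast_self] at this
    linear_combination this
  set g : ZMod 3 → ZMod m := fun t => if t = j then 1 else if t = j + 1 then 0 else -1 with hg
  have hrels : ∀ r ∈ bridgeRels 3 k l,
      FreeGroup.lift (fun t => Multiplicative.ofAdd (g t)) r = 1 := by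
    rintro r hr
    rcases hr with ⟨i, rfl⟩ | hr
    · rw [lift_bridgeRel_zmod, ofAdd_eq_one]
      rcases (show ∀ i : ZMod 3, i = 0 ∨ i = 1 ∨ i = 2 by decide) i with rfl | rfl | rfl <;>
        rcases (show ∀ j : ZMod 3, j = 0 ∨ j = 1 ∨ j = 2 by decide) j with rfl | rfl | rfl <;>
        simp [hg, show (0:ZMod 3)+1 = 1 by decide, show (0:ZMod 3)+2 = 2 by decide,
            show (1:ZMod 3)+1 = 2 by decide, show (1:ZMod 3)+2 = 0 by decide,
            show (2:ZMod 3)+1 = 0 by decide, show (2:ZMod 3)+2 = 1 by decide,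
            show (0:ZMod 3) ≠ 1 by decide, show (0:ZMod 3) ≠ 2 by decide,
            show (1:ZMod 3) ≠ 0 by decide, show (1:ZMod 3) ≠ 2 by decide,
            show (2:ZMod 3) ≠ 0 by decide, show (2:ZMod 3) ≠ 1 by decide,
            show (3:ZMod 3) = 0 by decide, show (4:ZMod 3) = 1 by decide] <;>
        first
            | linear_combination hKL
            | linear_combination -hKL
    · rw [Set.mem_singleton_iff] at hr
      subst hr
      rw [long_eq]
      rw [_root_.map_list_prod, List.map_map]
      simp only [Function.comp_def, FreeGroup.lift_apply_of, id_eq]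
      rw [show (List.range 3) = [0, 1, 2] by decide]
      simp only [List.map_cons, List.map_nil, List.prod_cons, List.prod_nil, mul_one,
        Nat.cast_zero, Nat.cast_one, Nat.cast_ofNat]
      rw [← ofAdd_add, ← ofAdd_add, ofAdd_eq_one]
      rcases (show ∀ j : ZMod 3, j = 0 ∨ j = 1 ∨ j = 2 by decide) j with rfl | rfl | rfl <;>
        · simp only [hg]
          simp [show (0:ZMod 3)+1 = 1 by decide, show (1:ZMod 3)+1 = 2 by decide,
            show (2:ZMod 3)+1 = 0 by decide,
            show (0:ZMod 3) ≠ 1 by decide, show (0:ZMod 3) ≠ 2 by decide,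
            show (1:ZMod 3) ≠ 0 by decide, show (1:ZMod 3) ≠ 2 by decide,
            show (2:ZMod 3) ≠ 0 by decide, show (2:ZMod 3) ≠ 1 by decide,
            show (3:ZMod 3) = 0 by decide, show (4:ZMod 3) = 1 by decide]
  intro h
  have h' := congrArg (PresentedGroup.toGroup hrels) h
  rw [_root_.map_one, PresentedGroup.toGroup.of] at h'
  have : (1 : ZMod m) = 0 := by
    have h2 := congrArg Multiplicative.toAdd h'
    simpa [hg] using h2
  exact one_ne_zero this

lemma complete_2 (k l : ℕ) : ∀ ε : ZMod 2 → Bool, ∃ w ∈ bridgeRels 2 k l,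
    w ≠ 1 ∧ ((∀ p ∈ w.toWord, p.2 = ε p.1) ∨ (∀ p ∈ w.toWord, p.2 ≠ ε p.1)) := by
  intro ε
  have hz : ∀ a : ZMod 2, a = 0 ∨ a = 1 := by decide
  cases he0 : ε 0 <;> cases he1 : ε 1
  · exact ⟨_, Or.inr rfl, blocks_of_signOK (long_ne_one 2 (by norm_num)) (signOK_long 2)
      (Or.inr (fun a => by rcases hz a with rfl | rfl <;> simp [he0, he1]))⟩
  · refine ⟨_, Or.inl ⟨0, rfl⟩, blocks_of_signOK (bridgeRel_ne_one 2 k l 0 (by decide) (by decide))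
      (signOK_bridgeRel 2 k l 0 (by decide) (by decide)) (Or.inl (fun a => ?_))⟩
    rcases hz a with rfl | rfl
    · rw [he0]; decide
    · rw [he1]; decide
  · refine ⟨_, Or.inl ⟨0, rfl⟩, blocks_of_signOK (bridgeRel_ne_one 2 k l 0 (by decide) (by decide))
      (signOK_bridgeRel 2 k l 0 (by decide) (by decide)) (Or.inr (fun a => ?_))⟩
    rcases hz a with rfl | rfl
    · rw [he0]; decide
    · rw [he1]; decide
  · exact ⟨_, Or.inr rfl, blocks_of_signOK (long_ne_one 2 (by norm_num)) (signOK_long 2)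
      (Or.inl (fun a => by rcases hz a with rfl | rfl <;> simp [he0, he1]))⟩

lemma complete_3 (k l : ℕ) : ∀ ε : ZMod 3 → Bool, ∃ w ∈ bridgeRels 3 k l,
    w ≠ 1 ∧ ((∀ p ∈ w.toWord, p.2 = ε p.1) ∨ (∀ p ∈ w.toWord, p.2 ≠ ε p.1)) := by
  intro ε
  have hz : ∀ a : ZMod 3, a = 0 ∨ a = 1 ∨ a = 2 := by decide
  cases he0 : ε 0 <;> cases he1 : ε 1 <;> cases he2 : ε 2
  -- FFF : long, disagree
  · exact ⟨_, Or.inr rfl, blocks_of_signOK (long_ne_one 3 (by norm_num)) (signOK_long 3)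
      (Or.inr (fun a => by rcases hz a with rfl | rfl | rfl <;> simp [he0, he1, he2]))⟩
  -- FFT : i = 1, agree
  · refine ⟨_, Or.inl ⟨1, rfl⟩, blocks_of_signOK (bridgeRel_ne_one 3 k l 1 (by decide) (by decide))
      (signOK_bridgeRel 3 k l 1 (by decide) (by decide)) (Or.inl (fun a => ?_))⟩
    rcases hz a with rfl | rfl | rfl
    · rw [he0]; decide
    · rw [he1]; decide
    · rw [he2]; decide
  -- FTF : i = 0, agree
  · refine ⟨_, Or.inl ⟨0, rfl⟩, blocks_of_signOK (bridgeRel_ne_one 3 k l 0 (by decide) (by decide))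
      (signOK_bridgeRel 3 k l 0 (by decide) (by decide)) (Or.inl (fun a => ?_))⟩
    rcases hz a with rfl | rfl | rfl
    · rw [he0]; decide
    · rw [he1]; decide
    · rw [he2]; decide
  -- FTT : i = 2, disagree
  · refine ⟨_, Or.inl ⟨2, rfl⟩, blocks_of_signOK (bridgeRel_ne_one 3 k l 2 (by decide) (by decide))
      (signOK_bridgeRel 3 k l 2 (by decide) (by decide)) (Or.inr (fun a => ?_))⟩
    rcases hz a with rfl | rfl | rfl
    · rw [he0]; decide
    · rw [he1]; decide
    · rw [he2]; decide
  -- TFF : i = 2, agree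
  · refine ⟨_, Or.inl ⟨2, rfl⟩, blocks_of_signOK (bridgeRel_ne_one 3 k l 2 (by decide) (by decide))
      (signOK_bridgeRel 3 k l 2 (by decide) (by decide)) (Or.inl (fun a => ?_))⟩
    rcases hz a with rfl | rfl | rfl
    · rw [he0]; decide
    · rw [he1]; decide
    · rw [he2]; decide
  -- TFT : i = 0, disagree
  · refine ⟨_, Or.inl ⟨0, rfl⟩, blocks_of_signOK (bridgeRel_ne_one 3 k l 0 (by decide) (by decide))
      (signOK_bridgeRel 3 k l 0 (by decide) (by decide)) (Or.inr (fun a => ?_))⟩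
    rcases hz a with rfl | rfl | rfl
    · rw [he0]; decide
    · rw [he1]; decide
    · rw [he2]; decide
  -- TTF : i = 1, disagree
  · refine ⟨_, Or.inl ⟨1, rfl⟩, blocks_of_signOK (bridgeRel_ne_one 3 k l 1 (by decide) (by decide))
      (signOK_bridgeRel 3 k l 1 (by decide) (by decide)) (Or.inr (fun a => ?_))⟩
    rcases hz a with rfl | rfl | rfl
    · rw [he0]; decide
    · rw [he1]; decide
    · rw [he2]; decide
  -- TTT : long, agree
  · exact ⟨_, Or.inr rfl, blocks_of_signOK (long_ne_one 3 (by norm_num)) (signOK_long 3)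
      (Or.inl (fun a => by rcases hz a with rfl | rfl | rfl <;> simp [he0, he1, he2]))⟩

/-- For odd `n₁ = 2k+1`, `n₃ = 2l+1` and `2 ≤ n ≤ 3`, the group
`⟨x₁,…,xₙ | r₁ = e, …, rₙ = e, x₁x₂⋯xₙ = e⟩` admits a complete presentation and hence
is not left-orderable. -/
theorem stmt_19 (n k l : ℕ) (hn : 2 ≤ n) (hn3 : n ≤ 3) :
    (∀ ε : ZMod n → Bool, ∃ w ∈ bridgeRels n k l, Blocks w ε) ∧
      ¬ IsLeftOrderable (PresentedGroup (bridgeRels n k l)) := by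
  interval_cases n
  · exact ⟨complete_2 k l, not_LO _ (complete_2 k l) (gen_ne_one_2 k l)⟩
  · exact ⟨complete_3 k l, not_LO _ (complete_3 k l) (gen_ne_one_3 k l)⟩
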